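/- Let τ have positive imaginary part and define θ[a,0](kτ,0) = Σ_{n∈ℤ} exp(πikτ(n+a)²) for a ∈ ℝ, k a positive integer. Then the product of two such theta constants satisfies the addition identity θ[i/3,0](3τ,0)·θ[j/3,0](3τ,0) = Σ_{m∈{0,1}} θ[(i-j+3m)/6,0](6τ,0)·θ[(i+j+3m)/6,0](6τ,0) for i, j ∈ ℤ. -/
import Mathlib


open Complex Real

/-- The theta constant `θ[a,0](kτ,0) = Σ_{n∈ℤ} exp(πikτ(n+a)²)`. -/
noncomputable def thetaConst (τ : ℂ) (a : ℝ) (k : ℕ) : ℂ :=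
  ∑' n : ℤ, Complex.exp ((π : ℂ) * Complex.I * (k : ℂ) * τ * ((n : ℂ) + (a : ℂ)) ^ 2)

lemma thetaTerm_eq (τ : ℂ) (a : ℝ) (k : ℕ) (n : ℤ) :
    Complex.exp ((π : ℂ) * Complex.I * (k : ℂ) * τ * ((n : ℂ) + (a : ℂ)) ^ 2) =
      jacobiTheta₂_term n ((k : ℂ) * τ * a) ((k : ℂ) * τ) *
        Complex.exp ((π : ℂ) * Complex.I * (k : ℂ) * τ * (a : ℂ) ^ 2) := by
  rw [jacobiTheta₂_term, ← Complex.exp_add]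
  congr 1
  ring

lemma summable_norm_thetaTerm (τ : ℂ) (hτ : 0 < τ.im) (a : ℝ) (k : ℕ) (hk : 0 < k) :
    Summable fun n : ℤ =>
      ‖Complex.exp ((π : ℂ) * Complex.I * (k : ℂ) * τ * ((n : ℂ) + (a : ℂ)) ^ 2)‖ := by
  have him : 0 < ((k : ℂ) * τ).im := by
    have : ((k : ℂ) * τ).im = (k : ℝ) * τ.im := by
      simp [Complex.mul_im]
    rw [this]
    have : (0 : ℝ) < (k : ℝ) := by exact_mod_cast hk
    positivity
  have h : Summable fun n : ℤ => jacobiTheta₂_term n ((k : ℂ) * τ * a) ((k : ℂ) * τ) :=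
    (summable_jacobiTheta₂_term_iff _ _).mpr him
  rw [← summable_norm_iff] at h
  have h2 := h.mul_right ‖Complex.exp ((π : ℂ) * Complex.I * (k : ℂ) * τ * (a : ℂ) ^ 2)‖
  refine h2.congr fun n => ?_
  rw [← norm_mul, ← thetaTerm_eq]

/-- The reindexing equivalence `Bool × ℤ × ℤ ≃ ℤ × ℤ` sending `(b, p, q)` to
`(q + p + ε, q - p)` where `ε = cond b 1 0`. -/
def pairEquiv : Bool × ℤ × ℤ ≃ ℤ × ℤ where
  toFun x := (x.2.2 + x.2.1 + (Bool.rec 0 1 x.1 : ℤ), x.2.2 - x.2.1)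
  invFun y := (decide ((y.1 + y.2) % 2 = 1),
    (y.1 - y.2 - (y.1 + y.2) % 2) / 2, (y.1 + y.2 - (y.1 + y.2) % 2) / 2)
  left_inv := by
    rintro ⟨b, p, q⟩
    rcases b <;> simp <;> constructor <;> omega
  right_inv := by
    rintro ⟨m, n⟩
    rcases Int.emod_two_eq (m + n) with h | h <;> simp [h] <;> omega

set_option maxHeartbeats 1000000 in
/-- The classical quadratic theta addition identity:
`θ[i/3,0](3τ)·θ[j/3,0](3τ) = Σ_{m=0,1} θ[(i-j+3m)/6,0](6τ)·θ[(i+j+3m)/6,0](6τ)`. -/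
theorem theta_addition (τ : ℂ) (hτ : 0 < τ.im) (i j : ℤ) :
    thetaConst τ ((i : ℝ) / 3) 3 * thetaConst τ ((j : ℝ) / 3) 3 =
      ∑ m ∈ Finset.range 2,
        thetaConst τ (((i : ℝ) - (j : ℝ) + 3 * (m : ℝ)) / 6) 6 *
          thetaConst τ (((i : ℝ) + (j : ℝ) + 3 * (m : ℝ)) / 6) 6 := by
  -- abbreviations
  set F : ℝ → ℕ → ℤ → ℂ := fun a k n =>
    Complex.exp ((π : ℂ) * Complex.I * (k : ℂ) * τ * ((n : ℂ) + (a : ℂ)) ^ 2) with hF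
  have hnorm : ∀ (a : ℝ) (k : ℕ), 0 < k → Summable fun n : ℤ => ‖F a k n‖ :=
    fun a k hk => summable_norm_thetaTerm τ hτ a k hk
  have key : ∀ ε : ℤ, ε = 0 ∨ ε = 1 → ∀ p q : ℤ,
      F ((i : ℝ)/3) 3 (q + p + ε) * F ((j : ℝ)/3) 3 (q - p) =
      F (((i : ℝ) - (j : ℝ) + 3 * (ε : ℝ))/6) 6 p *
        F (((i : ℝ) + (j : ℝ) + 3 * (ε : ℝ))/6) 6 q := by
    intro ε _ p q
    simp only [hF, ← Complex.exp_add]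
    congr 1
    push_cast
    ring
  -- expand each product of theta constants as a double sum
  have prodEq : ∀ (a b : ℝ) (k : ℕ), 0 < k →
      thetaConst τ a k * thetaConst τ b k = ∑' z : ℤ × ℤ, F a k z.1 * F b k z.2 :=
    fun a b k hk => tsum_mul_tsum_of_summable_norm (hnorm a k hk) (hnorm b k hk)
  have hsum33 : Summable fun z : ℤ × ℤ => F ((i:ℝ)/3) 3 z.1 * F ((j:ℝ)/3) 3 z.2 := by
    apply Summable.of_norm
    simpa only [norm_mul] using
      (hnorm ((i:ℝ)/3) 3 (by norm_num)).mul_of_nonneg (hnorm ((j:ℝ)/3) 3 (by norm_num))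
        (fun _ => norm_nonneg _) (fun _ => norm_nonneg _)
  rw [prodEq _ _ 3 (by norm_num)]
  rw [← pairEquiv.tsum_eq]
  have hsumB : Summable fun x : Bool × ℤ × ℤ =>
      F ((i:ℝ)/3) 3 (pairEquiv x).1 * F ((j:ℝ)/3) 3 (pairEquiv x).2 :=
    (pairEquiv.summable_iff).mpr hsum33
  rw [Summable.tsum_prod hsumB, tsum_bool]
  have e0 : ∀ p q : ℤ, (pairEquiv (false, p, q)) = (q + p, q - p) := fun p q => by
    simp [pairEquiv]
  have e1 : ∀ p q : ℤ, (pairEquiv (true, p, q)) = (q + p + 1, q - p) := fun p q => by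
    simp [pairEquiv]
  have hfalse : (∑' y : ℤ × ℤ, F ((i:ℝ)/3) 3 (pairEquiv (false, y)).1 *
      F ((j:ℝ)/3) 3 (pairEquiv (false, y)).2) =
      ∑' z : ℤ × ℤ, F (((i:ℝ) - (j:ℝ) + 3 * ((0:ℤ):ℝ))/6) 6 z.1 *
        F (((i:ℝ) + (j:ℝ) + 3 * ((0:ℤ):ℝ))/6) 6 z.2 := by
    refine tsum_congr fun z => ?_
    obtain ⟨p, q⟩ := z
    rw [show ((false, (p, q)) : Bool × ℤ × ℤ) = (false, p, q) from rfl, e0]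
    simpa using key 0 (Or.inl rfl) p q
  have htrue : (∑' y : ℤ × ℤ, F ((i:ℝ)/3) 3 (pairEquiv (true, y)).1 *
      F ((j:ℝ)/3) 3 (pairEquiv (true, y)).2) =
      ∑' z : ℤ × ℤ, F (((i:ℝ) - (j:ℝ) + 3 * ((1:ℤ):ℝ))/6) 6 z.1 *
        F (((i:ℝ) + (j:ℝ) + 3 * ((1:ℤ):ℝ))/6) 6 z.2 := by
    refine tsum_congr fun z => ?_
    obtain ⟨p, q⟩ := z
    rw [show ((true, (p, q)) : Bool × ℤ × ℤ) = (true, p, q) from rfl, e1]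
    simpa using key 1 (Or.inr rfl) p q
  rw [hfalse, htrue, ← prodEq _ _ 6 (by norm_num), ← prodEq _ _ 6 (by norm_num)]
  rw [Finset.sum_range_succ, Finset.sum_range_one]
  norm_num
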